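/- For every natural number k coprime to 6, the Riccati equation with parameter λ = k²/144 admits a rational solution: there exist real polynomials p and q with q ≠ 0 such that for every real x with x ≠ 0, x ≠ 1/432 and q(x) ≠ 0, the function r(x) = p(x)/q(x) satisfies r'(x) + r(x)²/((1-432x)x) - 60 = (k²/144)·(1/((1-432x)x)). -/

import Mathlib

open Polynomial Finset

noncomputable def riccA (k : ℕ) : ℕ → ℝ
  | 0 => 1
  | m + 1 => (72 * (6*(m:ℝ) - (k:ℝ) + 1) * (6*(m:ℝ) - (k:ℝ) + 5) /
      (((m:ℝ) + 1) * (6*(m:ℝ) - (k:ℝ) + 6))) * riccA k m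

theorem riccA_rec (k : ℕ) (hk : k % 6 = 1 ∨ k % 6 = 5) (m : ℕ) :
    ((m:ℝ) + 1) * (6*(m:ℝ) - (k:ℝ) + 6) * riccA k (m+1)
      = 72 * (6*(m:ℝ) - (k:ℝ) + 1) * (6*(m:ℝ) - (k:ℝ) + 5) * riccA k m := by
  have hne : (6*(m:ℝ) - (k:ℝ) + 6) ≠ 0 := by
    have hne' : k ≠ 6*(m+1) := by omega
    intro h
    apply hne'
    have h' : (k:ℝ) = ((6*(m+1):ℕ):ℝ) := by push_cast; linarith
    exact Nat.cast_injective h'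
  rw [riccA]
  field_simp
  have hne2 : ((m:ℝ) * 6 - (k:ℝ) + 6) ≠ 0 := by intro h; apply hne; linarith
  rw [div_eq_iff hne2]; ring

theorem riccA_vanish (k : ℕ) (hk : k % 6 = 1 ∨ k % 6 = 5) :
    ∀ m, k / 6 < m → riccA k m = 0 := by
  intro m hm
  induction m with
  | zero => omega
  | succ j ih =>
    rcases Nat.lt_or_ge (k/6) j with h | h
    · rw [riccA, ih h, mul_zero]
    · have hj : j = k / 6 := by omega
      subst hj
      rw [riccA]
      rcases hk with h1 | h1
      · have hc : (k:ℝ) = 6*((k/6 : ℕ):ℝ) + 1 := by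
          exact_mod_cast congrArg (Nat.cast (R := ℝ)) (by omega : k = 6*(k/6) + 1)
        have hz : 6*((k/6 : ℕ):ℝ) - (k:ℝ) + 1 = 0 := by rw [hc]; ring
        rw [hz]; ring
      · have hc : (k:ℝ) = 6*((k/6 : ℕ):ℝ) + 5 := by
          exact_mod_cast congrArg (Nat.cast (R := ℝ)) (by omega : k = 6*(k/6) + 5)
        have hz : 6*((k/6 : ℕ):ℝ) - (k:ℝ) + 5 = 0 := by rw [hc]; ring
        rw [hz]; ring

noncomputable def riccQ (k : ℕ) : Polynomial ℝ :=
  ∑ m ∈ Finset.range (k/6 + 1), C (riccA k m) * X ^ m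

theorem riccQ_coeff (k : ℕ) (hk : k % 6 = 1 ∨ k % 6 = 5) (m : ℕ) :
    (riccQ k).coeff m = riccA k m := by
  rw [riccQ, finset_sum_coeff]
  simp only [coeff_C_mul, coeff_X_pow, mul_ite, mul_one, mul_zero]
  rw [Finset.sum_ite_eq (Finset.range (k/6+1)) m (fun i => riccA k i)]
  by_cases h : m ∈ Finset.range (k/6+1)
  · rw [if_pos h]
  · rw [if_neg h]
    rw [Finset.mem_range] at h
    exact (riccA_vanish k hk m (by omega)).symm

theorem riccQ_ode (k : ℕ) (hk : k % 6 = 1 ∨ k % 6 = 5) (q : Polynomial ℝ)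
    (hco : ∀ m, q.coeff m = riccA k m) :
    6 * (X - 432 * X^2) * derivative (derivative q)
      - (((k:ℕ) : Polynomial ℝ) - 6) * (1 - 864 * X) * derivative q
      - 72 * (((k:ℕ) : Polynomial ℝ) - 1) * (((k:ℕ) : Polynomial ℝ) - 5) * q = 0 := by
  set q1 := derivative q with hq1
  set q2 := derivative q1 with hq2
  have hC : C (6:ℝ) * (X * q2) - C (2592:ℝ) * (X * (X * q2)) - C ((k:ℝ)-6) * q1
      + C (864*((k:ℝ)-6)) * (X*q1) - C (72*((k:ℝ)-1)*((k:ℝ)-5)) * q = 0 := by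
    apply Polynomial.ext
    intro m
    match m with
    | 0 =>
      simp only [coeff_sub, coeff_add, coeff_C_mul, coeff_zero, mul_coeff_zero,
        coeff_X_zero, zero_mul, mul_zero, coeff_C_zero, hq1, hq2, coeff_derivative, hco]
      have h := riccA_rec k hk 0
      push_cast at h ⊢
      linear_combination h
    | 1 =>
      simp only [coeff_sub, coeff_add, coeff_C_mul, coeff_zero, coeff_X_mul,
        mul_coeff_zero, coeff_X_zero, zero_mul, mul_zero, coeff_C_zero, hq1, hq2,
        coeff_derivative, hco]
      have h := riccA_rec k hk 1
      push_cast at h ⊢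
      linear_combination h
    | (m+2) =>
      simp only [coeff_sub, coeff_add, coeff_C_mul, coeff_zero, coeff_X_mul,
        hq1, hq2, coeff_derivative, hco]
      have h := riccA_rec k hk (m+2)
      push_cast at h ⊢
      linear_combination h
  calc 6 * (X - 432 * X^2) * q2
      - (((k:ℕ) : Polynomial ℝ) - 6) * (1 - 864 * X) * q1
      - 72 * (((k:ℕ) : Polynomial ℝ) - 1) * (((k:ℕ) : Polynomial ℝ) - 5) * q
      = C (6:ℝ) * (X * q2) - C (2592:ℝ) * (X * (X * q2)) - C ((k:ℝ)-6) * q1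
        + C (864*((k:ℝ)-6)) * (X*q1) - C (72*((k:ℝ)-1)*((k:ℝ)-5)) * q := by
        simp only [map_sub, map_mul, map_ofNat, map_natCast, map_one]
        ring
    _ = 0 := hC

/-- Existence direction of the main theorem: for every natural number `k` coprime to `6`,
the Riccati equation `r' + C_x r^2 - 60 = (k²/144) C_x`, with `C_x = 1/((1-432x)x)`,
admits a rational solution `r = p/q` with `p, q` real polynomials, `q ≠ 0`. -/
theorem riccati_rational_solution_of_coprime (k : ℕ) (hk : Nat.Coprime k 6) :
    ∃ p q : Polynomial ℝ, q ≠ 0 ∧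
      ∀ x : ℝ, x ≠ 0 → x ≠ 1 / 432 → q.eval x ≠ 0 →
        deriv (fun y : ℝ => p.eval y / q.eval y) x
          + (p.eval x / q.eval x) ^ 2 / ((1 - 432 * x) * x) - 60
        = ((k : ℝ) ^ 2 / 144) * (1 / ((1 - 432 * x) * x)) := by
  have hmod : k % 6 = 1 ∨ k % 6 = 5 := by
    have h2 : ¬ 2 ∣ k := by
      intro h
      have h6 : (2:ℕ) ∣ Nat.gcd k 6 := Nat.dvd_gcd h (by norm_num)
      rw [hk] at h6; omega
    have h3 : ¬ 3 ∣ k := by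
      intro h
      have h6 : (3:ℕ) ∣ Nat.gcd k 6 := Nat.dvd_gcd h (by norm_num)
      rw [hk] at h6; omega
    omega
  set q : Polynomial ℝ := riccQ k with hqdef
  have hco : ∀ m, q.coeff m = riccA k m := riccQ_coeff k hmod
  set q1 : Polynomial ℝ := derivative q with hq1def
  set K : Polynomial ℝ := ((k:ℕ) : Polynomial ℝ) with hKdef
  set P : Polynomial ℝ := (864 * K * X - K) * q + 12 * (X - 432 * X^2) * q1 with hPdef
  have hq0 : q ≠ 0 := by
    intro h
    have h0 := hco 0
    rw [h] at h0
    simp [riccA] at h0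
  have hL := riccQ_ode k hmod q hco
  rw [← hq1def, ← hKdef] at hL
  have hP' : derivative P
      = 864*K*q + (864*K*X - K)*q1 + 12*(1 - 864*X)*q1 + 12*(X - 432*X^2)*(derivative q1) := by
    rw [hPdef, hq1def, hKdef]
    simp only [derivative_add, derivative_mul, derivative_sub, derivative_X,
      derivative_ofNat, derivative_X_pow, derivative_natCast, derivative_one, map_ofNat,
      map_natCast]
    push_cast
    ring
  have hQ' : derivative (12 * q) = 12 * q1 := by
    rw [hq1def]
    simp only [derivative_mul, derivative_ofNat]
    ring
  have hE : (X - 432 * X^2) * (derivative P * (12 * q) - P * derivative (12 * q))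
      + P^2 - 60 * (X - 432 * X^2) * (12 * q)^2 - K^2 * q^2 = 0 := by
    rw [hP', hQ', hPdef]
    linear_combination (24 * (X - 432 * X^2) * q) * hL
  refine ⟨P, 12 * q, by simpa using hq0, ?_⟩
  intro x hx0 hx432 hqx
  have h432 : (1:ℝ) - 432*x ≠ 0 := fun h => hx432 (by linarith)
  have hAx : ((1 - 432*x)*x) ≠ 0 := mul_ne_zero h432 hx0
  have hqx' : q.eval x ≠ 0 := by
    intro h
    apply hqx
    simp [h]
  have hd : deriv (fun y : ℝ => P.eval y / (12*q).eval y) x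
      = ((derivative P).eval x * (12*q).eval x - P.eval x * (derivative (12*q)).eval x)
        / ((12*q).eval x)^2 :=
    (HasDerivAt.div (P.hasDerivAt x) ((12*q).hasDerivAt x) hqx).deriv
  rw [hd, hQ']
  have hEx := congrArg (Polynomial.eval x) hE
  rw [hQ'] at hEx
  simp only [eval_add, eval_sub, eval_mul, eval_pow, eval_X, eval_ofNat,
    eval_natCast, eval_zero, eval_one, hKdef] at hEx ⊢
  field_simp
  linear_combination 144 * hEx
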